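/- arXiv:2403.06464 — 2 statements merged into one kernel-verified Lean document; each statement's English description precedes it below -/
import Mathlib

section
/- The graph ∂B is maximal monotone in ℝ²×ℝ²: (i) for all r, r', d, d' ∈ ℝ² with d ∈ ∂B(r) and d' ∈ ∂B(r'), one has (d₁−d₁')·(r₁−r₁') + (d₂−d₂')·(r₂−r₂') ≥ 0; and (ii) if a pair (r,d) ∈ ℝ²×ℝ² satisfies (d₁−d₁')·(r₁−r₁') + (d₂−d₂')·(r₂−r₂') ≥ 0 for every pair (r',d') ∈ ℝ²×ℝ² with d' ∈ ∂B(r'), then d ∈ ∂B(r). -/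
set_option maxHeartbeats 1000000

/-- The subdifferential of `β` at `t`: `q ∈ ∂β(t)` iff `q·(s−t) ≤ β(s)−β(t)` for all `s`. -/
def subBeta (β : ℝ → ℝ) (t q : ℝ) : Prop :=
  ∀ s : ℝ, q * (s - t) ≤ β s - β t

/-- `d ∈ ∂B(r)` for the extended function `B(r) = β(r₁+r₂)` on the nonnegative quadrant. -/
def subB (β : ℝ → ℝ) (r d : ℝ × ℝ) : Prop :=
  0 ≤ r.1 ∧ 0 ≤ r.2 ∧ ∀ s₁ s₂ : ℝ, 0 ≤ s₁ → 0 ≤ s₂ →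
    d.1 * (s₁ - r.1) + d.2 * (s₂ - r.2) ≤ β (s₁ + s₂) - β (r.1 + r.2)

/-- `t ∈ ∂I_{[0,∞)}(ρ)`: subdifferential of the indicator of `[0,∞)` at `ρ`. -/
def subIndicator (ρ t : ℝ) : Prop :=
  0 ≤ ρ ∧ ∀ s : ℝ, 0 ≤ s → t * (s - ρ) ≤ 0


theorem beta_minorant (β : ℝ → ℝ) (hβ : ConvexOn ℝ Set.univ β) (hβ0 : β 0 = 0)
    (t : ℝ) (ht : 0 ≤ t) : (-β (-1)) * t ≤ β t := by
  rcases eq_or_lt_of_le ht with h | h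
  · simp [← h, hβ0]
  · have key := hβ.2 (Set.mem_univ (-1)) (Set.mem_univ t)
      (le_of_lt (show (0:ℝ) < t/(t+1) by positivity))
      (le_of_lt (show (0:ℝ) < 1/(t+1) by positivity))
      (by field_simp)
    have h0 : (t/(t+1)) • (-1:ℝ) + (1/(t+1)) • t = 0 := by simp only [smul_eq_mul]; field_simp; ring
    rw [h0, hβ0] at key
    simp only [smul_eq_mul] at key
    have ht1 : (0:ℝ) < t + 1 := by linarith
    rw [div_mul_eq_mul_div, div_mul_eq_mul_div, ← add_div] at key
    have := (le_div_iff₀ ht1).mp key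
    nlinarith

theorem exists_proj (β : ℝ → ℝ) (hβ : ConvexOn ℝ Set.univ β) (hβ0 : β 0 = 0)
    (c1 c2 : ℝ) :
    ∃ x1 x2 : ℝ, 0 ≤ x1 ∧ 0 ≤ x2 ∧ ∀ s1 s2 : ℝ, 0 ≤ s1 → 0 ≤ s2 →
      (c1 - x1) * (s1 - x1) + (c2 - x2) * (s2 - x2) ≤ β (s1 + s2) - β (x1 + x2) := by
  have hcont : Continuous β := by
    rw [← continuousOn_univ]
    exact hβ.continuousOn isOpen_univ
  set q : ℝ := -β (-1) with hq
  set a : ℝ := |q| + |c1| + |c2| with ha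
  have ha0 : 0 ≤ a := by positivity
  set R : ℝ := (a + 2)^2 with hR
  have hR4 : 4 ≤ R := by nlinarith
  set φ : ℝ × ℝ → ℝ := fun p => β (p.1 + p.2) + ((p.1 - c1)^2 + (p.2 - c2)^2) / 2 with hφ
  have hφc : ContinuousOn φ (Set.Icc ((0:ℝ),(0:ℝ)) (R,R)) := by
    apply Continuous.continuousOn
    fun_prop
  -- coercivity bound: for x in quadrant with x1 > R or x2 > R, φ (0,0) ≤ φ x
  have hcoer : ∀ x1 x2 : ℝ, 0 ≤ x1 → 0 ≤ x2 → (R < x1 ∨ R < x2) →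
      φ (0, 0) ≤ φ (x1, x2) := by
    intro x1 x2 hx1 hx2 hor
    have hmin : q * (x1 + x2) ≤ β (x1 + x2) :=
      beta_minorant β hβ hβ0 _ (by linarith)
    have hqa : -a ≤ q := by
      have := abs_nonneg c1; have := abs_nonneg c2; have := neg_abs_le q; linarith
    have hc1a : c1 ≤ a := by
      have := abs_nonneg q; have := abs_nonneg c2; have := le_abs_self c1; linarith
    have hc2a : c2 ≤ a := by
      have := abs_nonneg q; have := abs_nonneg c1; have := le_abs_self c2; linarith
    have hqa2 : q ≤ a := by
      have := abs_nonneg c1; have := abs_nonneg c2; have := le_abs_self q; linarith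
    have hc1b : -a ≤ c1 := by
      have := abs_nonneg q; have := abs_nonneg c2; have := neg_abs_le c1; linarith
    have hc2b : -a ≤ c2 := by
      have := abs_nonneg q; have := abs_nonneg c1; have := neg_abs_le c2; linarith
    have key : 0 ≤ q * (x1 + x2) + (x1^2 - 2*c1*x1 + x2^2 - 2*c2*x2) / 2 := by
      have e4 : 0 ≤ ((a+2)^2 - 4) * (a^2/2 + 2) :=
        mul_nonneg (by nlinarith) (by positivity)
      rcases hor with hbig | hbig
      · have h1 : 0 ≤ x1/2 - 2*a := by nlinarith
        have e1 : 0 ≤ x1 * (q - c1 + 2*a) := mul_nonneg hx1 (by linarith)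
        have e2 : 0 ≤ (x1 - R) * (x1/2 - 2*a) := mul_nonneg (by linarith) h1
        have e3 : 0 ≤ R * (x1 - R) := mul_nonneg (by positivity) (by linarith)
        have e5 : 0 ≤ (2*a - q + c2) * (2*a + q - c2) :=
          mul_nonneg (by linarith) (by linarith)
        nlinarith [sq_nonneg (x2 + (q - c2))]
      · have h1 : 0 ≤ x2/2 - 2*a := by nlinarith
        have e1 : 0 ≤ x2 * (q - c2 + 2*a) := mul_nonneg hx2 (by linarith)
        have e2 : 0 ≤ (x2 - R) * (x2/2 - 2*a) := mul_nonneg (by linarith) h1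
        have e3 : 0 ≤ R * (x2 - R) := mul_nonneg (by positivity) (by linarith)
        have e5 : 0 ≤ (2*a - q + c1) * (2*a + q - c1) :=
          mul_nonneg (by linarith) (by linarith)
        nlinarith [sq_nonneg (x1 + (q - c1))]
    simp only [hφ]
    simp only [add_zero, hβ0]
    nlinarith
  -- minimizer on the compact box
  have h00 : ((0:ℝ),(0:ℝ)) ∈ Set.Icc ((0:ℝ),(0:ℝ)) (R,R) :=
    Set.mem_Icc.2 ⟨le_refl _, Prod.mk_le_mk.2 ⟨by positivity, by positivity⟩⟩
  have hne : (Set.Icc ((0:ℝ),(0:ℝ)) (R,R)).Nonempty := ⟨_, h00⟩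
  obtain ⟨x, hxK, hxmin⟩ := (isCompact_Icc (a := ((0:ℝ),(0:ℝ))) (b := (R,R))).exists_isMinOn
    hne hφc
  obtain ⟨⟨hx01, hx02⟩, -⟩ := Set.mem_Icc.1 hxK
  have hx1 : (0:ℝ) ≤ x.1 := hx01
  have hx2 : (0:ℝ) ≤ x.2 := hx02
  -- global minimality on the quadrant
  have hglobal : ∀ s1 s2 : ℝ, 0 ≤ s1 → 0 ≤ s2 → φ x ≤ φ (s1, s2) := by
    intro s1 s2 hs1 hs2
    by_cases hcase : s1 ≤ R ∧ s2 ≤ R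
    · exact hxmin (Set.mem_Icc.2 ⟨Prod.mk_le_mk.2 ⟨hs1, hs2⟩,
        Prod.mk_le_mk.2 ⟨hcase.1, hcase.2⟩⟩)
    · have hor : R < s1 ∨ R < s2 := by
        by_contra hcon
        push_neg at hcon
        exact hcase ⟨hcon.1, hcon.2⟩
      exact le_trans (hxmin h00) (hcoer s1 s2 hs1 hs2 hor)
  refine ⟨x.1, x.2, hx1, hx2, fun s1 s2 hs1 hs2 => ?_⟩
  set C : ℝ := ((s1 - x.1)^2 + (s2 - x.2)^2) / 2 with hC
  have hC0 : 0 ≤ C := by positivity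
  have hkey : ∀ t : ℝ, 0 < t → t ≤ 1 →
      (c1 - x.1) * (s1 - x.1) + (c2 - x.2) * (s2 - x.2) ≤
        β (s1 + s2) - β (x.1 + x.2) + t * C := by
    intro t ht0 ht1
    have hy1 : 0 ≤ x.1 + t * (s1 - x.1) := by nlinarith
    have hy2 : 0 ≤ x.2 + t * (s2 - x.2) := by nlinarith
    have hmin := hglobal _ _ hy1 hy2
    have hconv := hβ.2 (Set.mem_univ (x.1 + x.2)) (Set.mem_univ (s1 + s2))
      (by linarith : (0:ℝ) ≤ 1 - t) ht0.le (by ring)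
    have harg : (1 - t) • (x.1 + x.2) + t • (s1 + s2)
        = (x.1 + t * (s1 - x.1)) + (x.2 + t * (s2 - x.2)) := by
      simp only [smul_eq_mul]; ring
    rw [harg] at hconv
    simp only [smul_eq_mul] at hconv
    simp only [hφ, smul_eq_mul] at hmin
    have h3 : t * ((c1 - x.1) * (s1 - x.1) + (c2 - x.2) * (s2 - x.2)) ≤
        t * (β (s1 + s2) - β (x.1 + x.2) + t * C) := by
      simp only [hC]
      nlinarith [hmin, hconv]
    exact (mul_le_mul_iff_right₀ ht0).mp h3
  apply le_of_forall_pos_le_add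
  intro ε hε
  have ht0 : 0 < min 1 (ε / (C + 1)) := lt_min one_pos (by positivity)
  have h4 := hkey _ ht0 (min_le_left _ _)
  have h5 : min 1 (ε / (C + 1)) * C ≤ ε := by
    have h6 : min 1 (ε / (C + 1)) ≤ ε / (C + 1) := min_le_right _ _
    have h7 : (0:ℝ) < C + 1 := by linarith
    calc min 1 (ε / (C + 1)) * C ≤ (ε / (C + 1)) * C :=
          mul_le_mul_of_nonneg_right h6 hC0
      _ ≤ ε := by rw [div_mul_eq_mul_div, div_le_iff₀ h7]; nlinarith
  linarith


/-- The graph ∂B is maximal monotone in ℝ²×ℝ². -/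
theorem subB_maximal_monotone (β : ℝ → ℝ)
    (hβ : ConvexOn ℝ Set.univ β) (hβ0 : β 0 = 0) :
    (∀ r r' d d' : ℝ × ℝ, subB β r d → subB β r' d' →
      0 ≤ (d.1 - d'.1) * (r.1 - r'.1) + (d.2 - d'.2) * (r.2 - r'.2)) ∧
    (∀ r d : ℝ × ℝ,
      (∀ r' d' : ℝ × ℝ, subB β r' d' →
        0 ≤ (d.1 - d'.1) * (r.1 - r'.1) + (d.2 - d'.2) * (r.2 - r'.2)) →
      subB β r d) := by
  constructor
  · intro r r' d d' hd hd'
    obtain ⟨hr1, hr2, h⟩ := hd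
    obtain ⟨hr1', hr2', h'⟩ := hd'
    have h1 := h r'.1 r'.2 hr1' hr2'
    have h2 := h' r.1 r.2 hr1 hr2
    nlinarith
  · intro r d H
    obtain ⟨x1, x2, hx1, hx2, hsub⟩ := exists_proj β hβ hβ0 (r.1 + d.1) (r.2 + d.2)
    have hmem : subB β (x1, x2) (r.1 + d.1 - x1, r.2 + d.2 - x2) := by
      refine ⟨hx1, hx2, fun s1 s2 hs1 hs2 => ?_⟩
      dsimp only
      exact hsub s1 s2 hs1 hs2
    have hH := H _ _ hmem
    dsimp only at hH
    have he1 : r.1 = x1 := by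
      nlinarith [sq_nonneg (r.1 - x1), sq_nonneg (r.2 - x2)]
    have he2 : r.2 = x2 := by
      nlinarith [sq_nonneg (r.1 - x1), sq_nonneg (r.2 - x2)]
    refine ⟨he1 ▸ hx1, he2 ▸ hx2, fun s1 s2 hs1 hs2 => ?_⟩
    have h6 := hsub s1 s2 hs1 hs2
    rw [he1, he2] at h6
    rw [he1, he2]
    linarith
end

section
/- For all r₁ > 0 and all d = (d₁,d₂) ∈ ℝ², one has d ∈ ∂B(r₁,0) if and only if d₁ ∈ ∂β(r₁) and d₂ ≤ d₁. -/
theorem subB_pos_zero (β : ℝ → ℝ)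
    (hβ : ConvexOn ℝ Set.univ β) (hβ0 : β 0 = 0) :
    ∀ r₁ : ℝ, 0 < r₁ → ∀ d₁ d₂ : ℝ,
      subB β (r₁, 0) (d₁, d₂) ↔ (subBeta β r₁ d₁ ∧ d₂ ≤ d₁) := by
  intro r₁ hr₁ d₁ d₂
  constructor
  · rintro ⟨-, -, h⟩
    simp only at h
    have hd2 : d₂ ≤ d₁ := by
      have := h 0 r₁ le_rfl hr₁.le
      simp at this
      nlinarith
    refine ⟨?_, hd2⟩
    intro s
    by_cases hs : 0 ≤ s
    · have := h s 0 hs le_rfl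
      simpa using this
    · push_neg at hs
      have hβr : β r₁ ≤ d₁ * r₁ := by
        have := h 0 0 le_rfl le_rfl
        simp [hβ0] at this
        linarith
      have hpos : (0:ℝ) < r₁ - s := by linarith
      have ha : (0:ℝ) ≤ r₁/(r₁-s) := by positivity
      have hb : (0:ℝ) ≤ -s/(r₁-s) := div_nonneg (by linarith) hpos.le
      have hab : r₁/(r₁-s) + -s/(r₁-s) = 1 := by field_simp; ring
      have hcvx := hβ.2 (Set.mem_univ s) (Set.mem_univ r₁) ha hb hab
      have hcomb : (r₁/(r₁-s)) • s + (-s/(r₁-s)) • r₁ = 0 := by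
        field_simp
        ring
      rw [hcomb, hβ0] at hcvx
      -- hcvx : 0 ≤ (r₁/(r₁-s)) * β s + (-s/(r₁-s)) * β r₁
      have key : s * β r₁ ≤ r₁ * β s := by
        have := mul_le_mul_of_nonneg_left hcvx hpos.le
        simp only [smul_eq_mul] at this
        field_simp at this
        nlinarith [this]
      nlinarith [mul_le_mul_of_nonpos_left hβr hs.le]
  · rintro ⟨h, hd⟩
    refine ⟨hr₁.le, le_rfl, fun s₁ s₂ hs₁ hs₂ => ?_⟩
    have := h (s₁ + s₂)
    simp only [add_zero]
    nlinarith [mul_le_mul_of_nonneg_right hd hs₂]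
end
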